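/- Let (K, δ) be a differential field of characteristic p > 0 that is existentially closed in every differentially separable extension. Then (K, δ) is differentially perfect, i.e. C_K = K^p. -/
import Mathlib


set_option synthInstance.maxHeartbeats 1000000
set_option maxHeartbeats 1000000

noncomputable section

open MvPolynomial

universe u

variable {K : Type u} [Field K]

/-- Evaluation of a differential polynomial in `m` differential variables (variable
`(i, j)` standing for `δʲ xᵢ`) at a tuple `β` of a differential field extension. -/
def devalT {L : Type u} [Field L] [Algebra K L] (δL : Derivation ℤ L L) {m : ℕ}
    (β : Fin m → L) (f : MvPolynomial (Fin m × ℕ) K) : L :=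
  aeval (fun q : Fin m × ℕ => (⇑δL)^[q.2] (β q.1)) f

/-- `(L, δL)/(K, δ)` is differentially separable: for every `a ∈ L`, whenever the family
`(δʲ a)ⱼ` is algebraically dependent over `K`, it is separably dependent over `K`,
i.e. some algebraic relation has a nonvanishing partial derivative at the point. -/
def DiffSepExt {L : Type u} [Field L] [Algebra K L] (δL : Derivation ℤ L L) : Prop :=
  ∀ a : L,
    (∃ f : MvPolynomial ℕ K, f ≠ 0 ∧ aeval (fun j => (⇑δL)^[j] a) f = 0) →
    ∃ f : MvPolynomial ℕ K, aeval (fun j => (⇑δL)^[j] a) f = 0 ∧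
      ∃ i : ℕ, aeval (fun j => (⇑δL)^[j] a) (pderiv i f) ≠ 0

section DerivPoly

open Polynomial

variable (δ : Derivation ℤ K K)

/-- Coefficientwise application of a derivation, as an additive hom on polynomials. -/
def polyDAdd : Polynomial K →+ Polynomial K where
  toFun f := f.sum fun n a => Polynomial.monomial n (δ a)
  map_zero' := Polynomial.sum_zero_index fun n a => Polynomial.monomial n (δ a)
  map_add' f g :=
    Polynomial.sum_add_index f g (fun n a => Polynomial.monomial n (δ a))
      (fun n => by simp) (fun n a b => by simp [map_add])

@[simp] lemma polyDAdd_monomial (n : ℕ) (a : K) :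
    polyDAdd δ (Polynomial.monomial n a) = Polynomial.monomial n (δ a) := by
  show (Polynomial.monomial n a).sum (fun n a => Polynomial.monomial n (δ a)) =
    Polynomial.monomial n (δ a)
  exact Polynomial.sum_monomial_index a (fun n a => Polynomial.monomial n (δ a)) (by simp)

/-- Coefficientwise application of a derivation is a `ℤ`-derivation on `K[X]`. -/
def polyD : Derivation ℤ (Polynomial K) (Polynomial K) where
  toLinearMap := (polyDAdd δ).toIntLinearMap
  map_one_eq_zero' := by
    show polyDAdd δ 1 = 0
    rw [← Polynomial.C_1, ← Polynomial.monomial_zero_left, polyDAdd_monomial,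
      Derivation.map_one_eq_zero, Polynomial.monomial_zero_right]
  leibniz' f g := by
    induction f using Polynomial.induction_on' with
    | add u v hu hv =>
      simp only [add_mul, map_add, hu, hv, smul_eq_mul, mul_add, add_smul]
      ring
    | monomial n a =>
      induction g using Polynomial.induction_on' with
      | add u v hu hv =>
        simp only [mul_add, map_add, hu, hv, smul_eq_mul, add_mul, smul_add]
        ring
      | monomial m b =>
        simp only [Polynomial.monomial_mul_monomial, AddMonoidHom.coe_toIntLinearMap,
          polyDAdd_monomial, Derivation.leibniz, smul_eq_mul, map_add]
        rw [add_comm m n]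

@[simp] lemma polyD_monomial (n : ℕ) (a : K) :
    polyD δ (Polynomial.monomial n a) = Polynomial.monomial n (δ a) :=
  polyDAdd_monomial δ n a

@[simp] lemma polyD_C (a : K) : polyD δ (Polynomial.C a) = Polynomial.C (δ a) := by
  rw [← Polynomial.monomial_zero_left, polyD_monomial, Polynomial.monomial_zero_left]

end DerivPoly

section Quotient

open Polynomial

variable (δ : Derivation ℤ K K) {q : Polynomial K}

lemma polyD_ideal_le (h0 : polyD δ q = 0) :
    (Ideal.span {q} : Ideal (Polynomial K)).restrictScalars ℤ ≤
      ((Ideal.span {q} : Ideal (Polynomial K)).restrictScalars ℤ).comap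
        (polyD δ).toLinearMap := by
  intro f hf
  simp only [Submodule.restrictScalars_mem, Ideal.mem_span_singleton] at hf ⊢
  obtain ⟨g, rfl⟩ := hf
  simp only [Submodule.mem_comap, Submodule.restrictScalars_mem, Ideal.mem_span_singleton,
    Derivation.coeFn_coe]
  rw [Derivation.leibniz, h0]
  simp only [smul_eq_mul, smul_zero, mul_zero, add_zero]
  exact dvd_mul_right _ _

variable (h0 : polyD δ q = 0)

/-- The induced `ℤ`-linear map on `AdjoinRoot q`. -/
def adjDlin : AdjoinRoot q →ₗ[ℤ] AdjoinRoot q :=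
  ((Submodule.Quotient.restrictScalarsEquiv ℤ
      (Ideal.span {q} : Ideal (Polynomial K))).toLinearMap.comp
    ((Submodule.mapQ _ _ (polyD δ).toLinearMap (polyD_ideal_le δ h0)).comp
      (Submodule.Quotient.restrictScalarsEquiv ℤ
        (Ideal.span {q} : Ideal (Polynomial K))).symm.toLinearMap))

@[simp] lemma adjDlin_mk (f : Polynomial K) :
    adjDlin δ h0 (AdjoinRoot.mk q f) = AdjoinRoot.mk q (polyD δ f) := by
  rfl

/-- The induced derivation on `AdjoinRoot q`. -/
def adjD : Derivation ℤ (AdjoinRoot q) (AdjoinRoot q) where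
  toLinearMap := adjDlin δ h0
  map_one_eq_zero' := by
    have h : (1 : AdjoinRoot q) = AdjoinRoot.mk q 1 := by simp
    rw [h, adjDlin_mk, Derivation.map_one_eq_zero, map_zero]
  leibniz' a b := by
    obtain ⟨f, rfl⟩ := AdjoinRoot.mk_surjective a
    obtain ⟨g, rfl⟩ := AdjoinRoot.mk_surjective b
    rw [← map_mul, adjDlin_mk, Derivation.leibniz]
    simp only [smul_eq_mul, map_add, map_mul, adjDlin_mk]

@[simp] lemma adjD_mk (f : Polynomial K) :
    adjD δ h0 (AdjoinRoot.mk q f) = AdjoinRoot.mk q (polyD δ f) :=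
  adjDlin_mk δ h0 f

end Quotient

/-- Any finite extension of fields with a derivation is differentially separable, since
`1, a, δa, …` must already be linearly dependent over `K`. -/
lemma diffSepExt_of_finiteDimensional {L : Type u} [Field L] [Algebra K L]
    [FiniteDimensional K L] (δL : Derivation ℤ L L) : DiffSepExt (K := K) δL := by
  classical
  intro a _
  set d := Module.finrank K L with hd
  set v : Fin (d + 1) → L := fun i => Fin.cases 1 (fun j : Fin d => (⇑δL)^[(j : ℕ)] a) i with hv
  have hnli : ¬ LinearIndependent K v := by
    intro h
    have := h.fintype_card_le_finrank
    simp only [Fintype.card_fin, ← hd] at this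
    omega
  obtain ⟨g, hg0, i0, hgi⟩ := Fintype.not_linearIndependent_iff.mp hnli
  have hsum : g 0 • (1 : L) + ∑ j : Fin d, g j.succ • (⇑δL)^[(j : ℕ)] a = 0 := by
    rw [← hg0, Fin.sum_univ_succ]
    simp [hv]
  have hex : ∃ j : Fin d, g j.succ ≠ 0 := by
    by_contra hc
    push_neg at hc
    have h1 : g 0 • (1 : L) = 0 := by
      rw [← hsum]
      simp [hc]
    have hg00 : g 0 = 0 := by
      simpa using h1
    rcases Fin.eq_zero_or_eq_succ i0 with h | ⟨j, rfl⟩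
    · exact hgi (h ▸ hg00)
    · exact hgi (hc j)
  obtain ⟨j0, hj0⟩ := hex
  refine ⟨MvPolynomial.C (g 0) + ∑ j : Fin d, MvPolynomial.C (g j.succ) * MvPolynomial.X (j : ℕ),
    ?_, (j0 : ℕ), ?_⟩
  · rw [map_add, map_sum]
    simp only [aeval_C, map_mul, aeval_X]
    rw [← hsum]
    congr 1
    · rw [Algebra.algebraMap_eq_smul_one]
    · refine Finset.sum_congr rfl fun j _ => ?_
      rw [Algebra.smul_def]
  · have hpd : pderiv (R := K) (j0 : ℕ)
        (MvPolynomial.C (g 0) + ∑ j : Fin d, MvPolynomial.C (g j.succ) * MvPolynomial.X (j : ℕ))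
        = MvPolynomial.C (g j0.succ) := by
      rw [map_add, pderiv_C, zero_add, map_sum]
      rw [Finset.sum_eq_single j0]
      · rw [pderiv_C_mul, pderiv_X_self, mul_one]
      · intro j _ hj
        rw [pderiv_C_mul, pderiv_X_of_ne, mul_zero]
        exact fun h => hj (Fin.val_injective h)
      · intro h
        exact absurd (Finset.mem_univ j0) h
    rw [hpd, aeval_C]
    intro h
    exact hj0 ((algebraMap K L).injective (h.trans (map_zero _).symm))

/-- If a differential field `(K, δ)` of characteristic `p > 0` is existentially closed in
every differentially separable extension, then it is differentially perfect:
`C_K = K^p`. -/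
theorem stmt17 (p : ℕ) [Fact p.Prime] [CharP K p] (δ : Derivation ℤ K K)
    (hec : ∀ (L : Type u) [Field L] [Algebra K L] (δL : Derivation ℤ L L),
      (∀ a : K, δL (algebraMap K L a) = algebraMap K L (δ a)) →
      DiffSepExt (K := K) δL →
      ∀ (m r s : ℕ) (F : Fin r → MvPolynomial (Fin m × ℕ) K)
        (G : Fin s → MvPolynomial (Fin m × ℕ) K),
        (∃ β : Fin m → L, (∀ k, devalT δL β (F k) = 0) ∧ ∀ k, devalT δL β (G k) ≠ 0) →
        ∃ α : Fin m → K, (∀ k, devalT δ α (F k) = 0) ∧ ∀ k, devalT δ α (G k) ≠ 0) :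
    ∀ b : K, δ b = 0 → ∃ c : K, c ^ p = b := by
  intro b hb
  by_cases hroot : ∃ c : K, c ^ p = b
  · exact hroot
  push_neg at hroot
  have hp : p.Prime := Fact.out
  set q : Polynomial K := Polynomial.X ^ p - Polynomial.C b with hq
  have hirr : Irreducible q := X_pow_sub_C_irreducible_of_prime hp hroot
  haveI : Fact (Irreducible q) := ⟨hirr⟩
  have hqne : q ≠ 0 := Polynomial.X_pow_sub_C_ne_zero hp.pos b
  haveI : FiniteDimensional K (AdjoinRoot q) :=
    Module.Finite.of_basis (AdjoinRoot.powerBasis hqne).basis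
  have h0 : polyD δ q = 0 := by
    rw [hq]
    have h1 : (Polynomial.X : Polynomial K) ^ p = Polynomial.monomial p 1 :=
      Polynomial.X_pow_eq_monomial p
    rw [sub_eq_add_neg, map_add, map_neg, h1, polyD_monomial, polyD_C, hb,
      Derivation.map_one_eq_zero]
    simp
  set δL := adjD δ h0 with hδL
  have hcompat : ∀ a : K, δL (algebraMap K (AdjoinRoot q) a) = algebraMap K (AdjoinRoot q) (δ a) := by
    intro a
    rw [AdjoinRoot.algebraMap_eq]
    show δL (AdjoinRoot.mk q (Polynomial.C a)) = AdjoinRoot.of q (δ a)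
    rw [hδL, adjD_mk, polyD_C]
    rfl
  have hsep : DiffSepExt (K := K) δL := diffSepExt_of_finiteDimensional δL
  -- the system: x ^ p - b = 0
  set F : Fin 1 → MvPolynomial (Fin 1 × ℕ) K :=
    fun _ => (MvPolynomial.X ((0 : Fin 1), (0 : ℕ))) ^ p - MvPolynomial.C b with hF
  have hβ : ∃ β : Fin 1 → AdjoinRoot q, (∀ k, devalT δL β (F k) = 0) ∧
      ∀ k : Fin 0, devalT δL β ((fun k => k.elim0 : Fin 0 → MvPolynomial (Fin 1 × ℕ) K) k) ≠ 0 := by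
    refine ⟨fun _ => AdjoinRoot.root q, fun k => ?_, fun k => k.elim0⟩
    simp only [hF, devalT, map_sub, map_pow, aeval_X, aeval_C, Function.iterate_zero, id_eq]
    rw [sub_eq_zero]
    have := root_X_pow_sub_C_pow p b
    rw [← hq] at this
    rw [this, AdjoinRoot.algebraMap_eq]
  obtain ⟨α, hα, -⟩ := hec (AdjoinRoot q) δL hcompat hsep 1 1 0 F _ hβ
  refine ⟨α 0, ?_⟩
  have := hα 0
  simp only [hF, devalT, map_sub, map_pow, aeval_X, aeval_C, Function.iterate_zero, id_eq,
    Algebra.algebraMap_self_apply, sub_eq_zero] at this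
  simpa using this
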